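/- Let α ≤ 1/2 and let f be an entire function with |f(0)| = 1 whose zeros are exactly points z_n with |z_n| = √(n+α) for n = 1,2,3,…. Then ∫_ℂ |f(z)|² e^{−|z|²} dm(z) = ∞. Consequently, every sequence of points with moduli √(n+α), α ≤ 1/2, is a uniqueness set for the classical Fock space F². -/

import Mathlib

open MeasureTheory Complex Set
open scoped Real

noncomputable def Complex.abs : AbsoluteValue ℂ ℝ where
  toFun := fun z => ‖z‖
  map_mul' := norm_mul
  nonneg' := norm_nonneg
  eq_zero' := fun _ => norm_eq_zero
  add_le' := norm_add_le

theorem Complex.norm_eq_abs (z : ℂ) : ‖z‖ = Complex.abs z := rfl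

theorem Complex.abs_I : Complex.abs Complex.I = 1 := Complex.norm_I

theorem Complex.abs_two : Complex.abs 2 = 2 := Complex.norm_two

theorem Complex.abs_ofReal (x : ℝ) : Complex.abs (x : ℂ) = |x| := Complex.norm_real x

theorem Complex.abs_conj (z : ℂ) : Complex.abs ((starRingEnd ℂ) z) = Complex.abs z :=
  Complex.norm_conj z

theorem Complex.sq_abs (z : ℂ) : Complex.abs z ^ 2 = Complex.normSq z := Complex.sq_norm z

theorem Complex.continuous_abs : Continuous Complex.abs := continuous_norm

theorem Complex.polarCoord_symm_abs (p : ℝ × ℝ) :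
    Complex.abs (Complex.polarCoord.symm p) = |p.1| := Complex.norm_polarCoord_symm p

theorem abs_circleMap_zero (R θ : ℝ) : Complex.abs (circleMap 0 R θ) = |R| :=
  norm_circleMap_zero R θ

namespace Statement2Aux

open Real Filter

lemma key_log {y : ℝ} (hy : 0 < y) :
    1 ≤ (y + 1/2) * (Real.log (y + 1) - Real.log y) := by
  set c : ℝ := y + 1/2 with hc
  have hcpos : 0 < c := by positivity
  have hne : ∀ t ∈ Set.uIcc y (y+1), t ≠ 0 := by
    intro t ht
    rcases Set.mem_uIcc.1 ht with ⟨h1, _⟩ | ⟨_, h2⟩ <;> nlinarith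
  have hlog : Real.log (y + 1) - Real.log y = ∫ t in y..(y+1), 1/t := by
    rw [integral_one_div (fun h => (hne 0 h) rfl)]
    rw [Real.log_div (by positivity) (by positivity)]
  have hint : IntervalIntegrable (fun t : ℝ => 1/t) volume y (y+1) := by
    apply ContinuousOn.intervalIntegrable
    exact continuousOn_const.div continuousOn_id hne
  have hmono : (∫ t in y..(y+1), (2*c - t)/c^2) ≤ ∫ t in y..(y+1), 1/t := by
    apply intervalIntegral.integral_mono_on (by linarith)
      (Continuous.intervalIntegrable (by continuity) _ _) hint
    intro t ht
    have ht1 : y ≤ t := ht.1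
    have htpos : 0 < t := lt_of_lt_of_le hy ht1
    rw [div_le_div_iff₀ (by positivity) htpos]
    nlinarith [sq_nonneg (t - c)]
  have hval : (∫ t in y..(y+1), (2*c - t)/c^2) = 1/c := by
    have : (∫ t in y..(y+1), (2*c - t)/c^2)
        = (∫ t in y..(y+1), (2*c - t)) / c^2 := by
      rw [intervalIntegral.integral_div]
    rw [this, intervalIntegral.integral_sub (intervalIntegrable_const)
      (intervalIntegral.intervalIntegrable_id), intervalIntegral.integral_const,
      integral_id]
    field_simp
    ring
  rw [hlog]
  calc (1:ℝ) = c * (1/c) := by field_simp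
  _ ≤ c * ∫ t in y..(y+1), 1/t := by
      apply mul_le_mul_of_nonneg_left _ hcpos.le
      rw [← hval]; exact hmono

lemma sum_log_le (α : ℝ) (hα' : -1 < α) :
    ∀ m : ℕ, 1 ≤ m →
      ∑ n ∈ Finset.Icc 1 m, Real.log (n + α)
        ≤ (m + α + 1/2) * Real.log (m + α) - m + (1 - (α + 1/2) * Real.log (1 + α)) := by
  intro m hm
  induction m with
  | zero => omega
  | succ m ih =>
    rcases Nat.eq_or_lt_of_le hm with h1 | h1
    · have hm0 : m = 0 := by omega
      subst hm0
      simp only [Finset.Icc_self, Finset.sum_singleton, Nat.cast_one]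
      ring_nf
      nlinarith [Real.log_nonneg (le_refl (1:ℝ))]
    · have hm1 : 1 ≤ m := by omega
      have IH := ih hm1
      have hy : (0:ℝ) < m + α := by
        have : (1:ℝ) ≤ m := by exact_mod_cast hm1
        linarith
      have key := key_log hy
      rw [Finset.sum_Icc_succ_top (by omega : 1 ≤ m + 1)]
      push_cast
      have e : ((m:ℝ) + 1 + α) = (m + α + 1) := by ring
      rw [e]
      nlinarith [key, IH]

theorem lintegral_comp_polarCoord_symm_aux (g : ℝ × ℝ → ENNReal) :
    ∫⁻ p, g p = ∫⁻ p in polarCoord.target, ENNReal.ofReal p.1 * g (polarCoord.symm p) := by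
  set B : ℝ × ℝ → ℝ × ℝ →L[ℝ] ℝ × ℝ := fun p =>
    LinearMap.toContinuousLinearMap (Matrix.toLin (Module.Basis.finTwoProd ℝ) (Module.Basis.finTwoProd ℝ)
      !![Real.cos p.2, -p.1 * Real.sin p.2; Real.sin p.2, p.1 * Real.cos p.2]) with hB
  have A : ∀ p ∈ polarCoord.target, HasFDerivWithinAt polarCoord.symm (B p) polarCoord.target p :=
    fun p _ => (hasFDerivAt_polarCoord_symm p).hasFDerivWithinAt
  have B_det : ∀ p, (B p).det = p.1 := by
    intro p
    conv_rhs => rw [← one_mul p.1, ← Real.cos_sq_add_sin_sq p.2]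
    simp only [hB, neg_mul, LinearMap.det_toContinuousLinearMap, LinearMap.det_toLin,
      Matrix.det_fin_two_of, sub_neg_eq_add]
    ring
  calc
    ∫⁻ p, g p = ∫⁻ p in polarCoord.source, g p := by
      rw [← setLIntegral_univ]
      exact setLIntegral_congr polarCoord_source_ae_eq_univ.symm
    _ = ∫⁻ p in polarCoord.symm '' polarCoord.target, g p := by
      rw [OpenPartialHomeomorph.symm_image_target_eq_source]
    _ = ∫⁻ p in polarCoord.target, ENNReal.ofReal |(B p).det| * g (polarCoord.symm p) := by
      apply lintegral_image_eq_lintegral_abs_det_fderiv_mul volume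
        polarCoord.open_target.measurableSet A polarCoord.symm.injOn g
    _ = ∫⁻ p in polarCoord.target, ENNReal.ofReal p.1 * g (polarCoord.symm p) := by
      apply setLIntegral_congr_fun polarCoord.open_target.measurableSet
      intro p hp
      dsimp only
      rw [B_det, abs_of_pos hp.1]

theorem lintegral_comp_polarCoord_symm (g : ℂ → ENNReal) :
    ∫⁻ z, g z = ∫⁻ p in polarCoord.target, ENNReal.ofReal p.1 * g (Complex.polarCoord.symm p) := by
  rw [← (Complex.volume_preserving_equiv_real_prod.symm).lintegral_comp_emb
    Complex.measurableEquivRealProd.symm.measurableEmbedding g,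
    lintegral_comp_polarCoord_symm_aux]
  rfl

lemma circle_mean (G : ℂ → ℂ) (hG : Differentiable ℂ G) {r : ℝ} (hr : 0 < r) :
    2 * π * Complex.abs (G 0) ≤ ∫ t in (0:ℝ)..(2*π), Complex.abs (G (circleMap 0 r t)) := by
  have h1 : (∮ w in C(0, r), (w - 0)⁻¹ • G w) = (2 * ↑π * I) • G 0 :=
    (hG.diffContOnCl).circleIntegral_sub_inv_smul (Metric.mem_ball_self hr)
  have h2 : ‖(2 * ↑π * I : ℂ) • G 0‖ = 2 * π * Complex.abs (G 0) := by
    rw [norm_smul, Complex.norm_eq_abs, Complex.norm_eq_abs, map_mul, map_mul,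
      Complex.abs_I, Complex.abs_two, Complex.abs_ofReal,
      _root_.abs_of_nonneg Real.pi_nonneg, mul_one]
  rw [← h2, ← h1]
  unfold circleIntegral
  refine le_trans (intervalIntegral.norm_integral_le_integral_norm (by positivity)) ?_
  apply le_of_eq
  apply intervalIntegral.integral_congr
  intro t _
  simp only
  have habs : Complex.abs (circleMap 0 r t) = r := by
    simp [abs_circleMap_zero, abs_of_pos hr]
  have hne : circleMap 0 r t ≠ 0 := by
    intro h
    rw [h] at habs
    simp at habs
    exact hr.ne' habs.symm
  rw [deriv_circleMap]
  simp only [sub_zero, norm_smul]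
  rw [Complex.norm_eq_abs, Complex.norm_eq_abs, map_mul, map_inv₀]
  simp only [Complex.abs_I, mul_one, habs, Complex.norm_eq_abs]
  field_simp

lemma exists_factor (f : ℂ → ℂ) (hf : Differentiable ℂ f) (z : ℕ → ℂ) (m : ℕ)
    (hzero : ∀ n, 1 ≤ n → n ≤ m → f (z n) = 0)
    (hdist : ∀ i j, 1 ≤ i → i ≤ m → 1 ≤ j → j ≤ m → z i = z j → i = j) :
    ∃ h : ℂ → ℂ, Differentiable ℂ h ∧
      ∀ w, f w = h w * ∏ n ∈ Finset.Icc 1 m, (w - z n) := by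
  induction m with
  | zero => exact ⟨f, hf, fun w => by simp⟩
  | succ m ih =>
    obtain ⟨h, hh, hfac⟩ := ih (fun n h1 h2 => hzero n h1 (by omega))
      (fun i j h1 h2 h3 h4 => hdist i j h1 (by omega) h3 (by omega))
    have hzm : h (z (m+1)) = 0 := by
      have h0 : f (z (m+1)) = 0 := hzero _ (by omega) le_rfl
      rw [hfac] at h0
      rcases mul_eq_zero.1 h0 with h' | h'
      · exact h'
      · exfalso
        obtain ⟨n, hn, hzn⟩ := Finset.prod_eq_zero_iff.1 h'
        have : z (m+1) = z n := sub_eq_zero.1 hzn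
        have hn1 := Finset.mem_Icc.1 hn
        have := hdist (m+1) n (by omega) le_rfl hn1.1 (by omega) this
        omega
    refine ⟨dslope h (z (m+1)), ?_, ?_⟩
    · rw [← differentiableOn_univ]
      rw [Complex.differentiableOn_dslope (Filter.univ_mem)]
      exact hh.differentiableOn
    · intro w
      have hs : (w - z (m+1)) * dslope h (z (m+1)) w = h w := by
        have := sub_smul_dslope h (z (m+1)) w
        rw [smul_eq_mul] at this
        rw [this, hzm, sub_zero]
      rw [Finset.prod_Icc_succ_top (by omega : 1 ≤ m + 1), hfac, ← hs]
      ring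

lemma circle_bound
    (α : ℝ) (hα' : -1 < α)
    (z : ℕ → ℂ) (hz : ∀ n : ℕ, 1 ≤ n → Complex.abs (z n) = Real.sqrt (n + α))
    (f : ℂ → ℂ) (hf : Differentiable ℂ f) (hf0 : Complex.abs (f 0) = 1)
    (hzero : ∀ n : ℕ, 1 ≤ n → f (z n) = 0)
    (m : ℕ) (hm : 1 ≤ m) {r : ℝ} (hr : 0 < r) :
    2 * π * r^(2*m) / (∏ n ∈ Finset.Icc 1 m, ((n:ℝ) + α))
      ≤ ∫ t in (0:ℝ)..(2*π), (Complex.abs (f (circleMap 0 r t)))^2 := by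
  have hnpos : ∀ n ∈ Finset.Icc 1 m, (0:ℝ) < (n:ℝ) + α := by
    intro n hn
    have h1 : 1 ≤ n := (Finset.mem_Icc.1 hn).1
    have : (1:ℝ) ≤ (n:ℝ) := by exact_mod_cast h1
    linarith
  set Pm : ℝ := ∏ n ∈ Finset.Icc 1 m, ((n:ℝ) + α) with hPm
  have hPmpos : 0 < Pm := Finset.prod_pos hnpos
  set Qs : ℝ := ∏ n ∈ Finset.Icc 1 m, Real.sqrt ((n:ℝ) + α) with hQs
  have hQspos : 0 < Qs := Finset.prod_pos fun n hn => Real.sqrt_pos.2 (hnpos n hn)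
  have hQs2 : Qs^2 = Pm := by
    rw [hQs, ← Finset.prod_pow]
    exact Finset.prod_congr rfl fun n hn => Real.sq_sqrt (hnpos n hn).le
  -- distinctness
  have hdist : ∀ i j, 1 ≤ i → i ≤ m → 1 ≤ j → j ≤ m → z i = z j → i = j := by
    intro i j hi _ hj _ hij
    have h1 : Real.sqrt ((i:ℝ) + α) = Real.sqrt ((j:ℝ) + α) := by
      rw [← hz i hi, ← hz j hj, hij]
    have hi0 : (0:ℝ) ≤ (i:ℝ) + α := by
      have : (1:ℝ) ≤ (i:ℝ) := by exact_mod_cast hi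
      linarith
    have hj0 : (0:ℝ) ≤ (j:ℝ) + α := by
      have : (1:ℝ) ≤ (j:ℝ) := by exact_mod_cast hj
      linarith
    have h2 : (i:ℝ) + α = (j:ℝ) + α := by
      rw [← Real.sq_sqrt hi0, ← Real.sq_sqrt hj0, h1]
    have : (i:ℝ) = (j:ℝ) := by linarith
    exact_mod_cast this
  obtain ⟨h, hh, hfac⟩ := exists_factor f hf z m (fun n h1 _ => hzero n h1) hdist
  -- |h 0| * Qs = 1
  have habs0 : Complex.abs (h 0) * Qs = 1 := by
    have h0 := hfac 0
    have : Complex.abs (f 0) = Complex.abs (h 0) * Qs := by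
      rw [h0, map_mul, map_prod]
      congr 1
      rw [hQs]
      refine Finset.prod_congr rfl fun n hn => ?_
      rw [zero_sub, map_neg_eq_map, hz n (Finset.mem_Icc.1 hn).1]
    rw [← this, hf0]
  -- the auxiliary entire function
  set Q : ℂ → ℂ := fun w =>
    (h w * ∏ n ∈ Finset.Icc 1 m, (((r:ℝ):ℂ)^2 - (starRingEnd ℂ) (z n) * w))^2 with hQdef
  have hQdiff : Differentiable ℂ Q := by
    apply Differentiable.pow
    apply hh.mul
    apply Differentiable.fun_finsetProd
    intro n _
    exact (differentiable_const _).sub ((differentiable_const _).mul differentiable_id)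
  have hkey := circle_mean Q hQdiff hr
  -- value at 0
  have hQ0 : Complex.abs (Q 0) = (Complex.abs (h 0))^2 * (r^(2*m))^2 := by
    have : Q 0 = (h 0 * (((r:ℝ):ℂ)^2)^m)^2 := by
      rw [hQdef]
      simp only [mul_zero, sub_zero, Finset.prod_const, Nat.card_Icc, Nat.add_sub_cancel]
    rw [this, map_pow, map_mul, map_pow, map_pow, Complex.abs_ofReal,
      _root_.abs_of_pos hr]
    ring
  -- pointwise identity on the circle
  have hptw : ∀ t : ℝ, Complex.abs (Q (circleMap 0 r t))
      = r^(2*m) * (Complex.abs (f (circleMap 0 r t)))^2 := by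
    intro t
    set w : ℂ := circleMap 0 r t with hw
    have habsw : Complex.abs w = r := by
      rw [hw]; simp [abs_circleMap_zero, _root_.abs_of_pos hr]
    have hfactor : ∀ n : ℕ, Complex.abs (((r:ℝ):ℂ)^2 - (starRingEnd ℂ) (z n) * w)
        = r * Complex.abs (w - z n) := by
      intro n
      have hwc : (((r:ℝ):ℂ))^2 = w * (starRingEnd ℂ) w := by
        rw [Complex.mul_conj]
        rw [← Complex.sq_abs, habsw]
        push_cast
        ring
      have : (((r:ℝ):ℂ))^2 - (starRingEnd ℂ) (z n) * w
          = (starRingEnd ℂ) (w - z n) * w := by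
        rw [hwc, map_sub]; ring
      rw [this, map_mul, Complex.abs_conj, habsw]; ring
    rw [hQdef]
    simp only [map_pow, map_mul, map_prod]
    rw [Finset.prod_congr rfl (fun n _ => hfactor n), Finset.prod_mul_distrib,
      Finset.prod_const, Nat.card_Icc, Nat.add_sub_cancel]
    have hfabs : Complex.abs (f w) = Complex.abs (h w) * ∏ n ∈ Finset.Icc 1 m,
        Complex.abs (w - z n) := by
      rw [hfac w, map_mul, map_prod]
    rw [hfabs]
    rw [pow_mul]
    ring
  -- rewrite the integral
  have hint : (∫ t in (0:ℝ)..(2*π), Complex.abs (Q (circleMap 0 r t)))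
      = r^(2*m) * ∫ t in (0:ℝ)..(2*π), (Complex.abs (f (circleMap 0 r t)))^2 := by
    rw [← intervalIntegral.integral_const_mul]
    exact intervalIntegral.integral_congr fun t _ => hptw t
  rw [hint, hQ0] at hkey
  -- conclude by arithmetic
  have hr2m : (0:ℝ) < r^(2*m) := by positivity
  rw [div_le_iff₀ hPmpos]
  have habs02 : (Complex.abs (h 0))^2 * Pm = 1 := by
    rw [← hQs2]; nlinarith [habs0]
  have h5 := mul_le_mul_of_nonneg_right hkey hPmpos.le
  have h6 : 2 * π * (Complex.abs (h 0) ^ 2 * (r ^ (2 * m)) ^ 2) * Pm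
      = (2 * π * r^(2*m)) * r^(2*m) := by
    linear_combination (2 * π * (r^(2*m))^2) * habs02
  rw [h6] at h5
  nlinarith [h5, hr2m]

lemma annulus_bound
    (α : ℝ) (hα' : -1 < α)
    (z : ℕ → ℂ) (hz : ∀ n : ℕ, 1 ≤ n → Complex.abs (z n) = Real.sqrt (n + α))
    (f : ℂ → ℂ) (hf : Differentiable ℂ f) (hf0 : Complex.abs (f 0) = 1)
    (hzero : ∀ n : ℕ, 1 ≤ n → f (z n) = 0)
    (m : ℕ) (hm : 2 ≤ m) :
    ENNReal.ofReal ((2*π/3) * ((m:ℝ)+α)^m * Real.exp (-((m:ℝ)+1+α)) /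
        (∏ n ∈ Finset.Icc 1 m, ((n:ℝ)+α)))
      ≤ ∫⁻ p in (Set.Ioo (Real.sqrt ((m:ℝ)+α)) (Real.sqrt ((m:ℝ)+1+α)) ×ˢ Set.Ioo (-π) π),
          ENNReal.ofReal p.1 *
            ENNReal.ofReal ((Complex.abs (f (Complex.polarCoord.symm p)))^2 *
              Real.exp (-(Complex.abs (Complex.polarCoord.symm p))^2)) := by
  have hm2 : (2:ℝ) ≤ (m:ℝ) := by exact_mod_cast hm
  have hy1 : (1:ℝ) < (m:ℝ) + α := by linarith
  set a : ℝ := Real.sqrt ((m:ℝ)+α) with ha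
  set b : ℝ := Real.sqrt ((m:ℝ)+1+α) with hb
  have ha2 : a^2 = (m:ℝ)+α := Real.sq_sqrt (by linarith)
  have hb2 : b^2 = (m:ℝ)+1+α := Real.sq_sqrt (by linarith)
  have ha1 : 1 ≤ a := Real.one_le_sqrt.2 (by linarith)
  have ha0 : 0 < a := by linarith
  have hab : a < b := Real.sqrt_lt_sqrt (by linarith) (by linarith)
  have hble : b ≤ a + 1 := by
    have h1 : (m:ℝ)+1+α ≤ (a+1)^2 := by nlinarith
    calc b ≤ Real.sqrt ((a+1)^2) := Real.sqrt_le_sqrt h1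
    _ = a + 1 := Real.sqrt_sq (by linarith)
  have h13 : 1/3 ≤ a * (b - a) := by
    have h1 : (b - a) * (b + a) = 1 := by nlinarith
    nlinarith
  have hnpos : ∀ n ∈ Finset.Icc 1 m, (0:ℝ) < (n:ℝ) + α := by
    intro n hn
    have h1 : 1 ≤ n := (Finset.mem_Icc.1 hn).1
    have : (1:ℝ) ≤ (n:ℝ) := by exact_mod_cast h1
    linarith
  set Pm : ℝ := ∏ n ∈ Finset.Icc 1 m, ((n:ℝ) + α) with hPm
  have hPmpos : 0 < Pm := Finset.prod_pos hnpos
  -- explicit polar symm map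
  set φ : ℝ × ℝ → ℂ := fun p => (p.1 : ℂ) * (Real.cos p.2 + Real.sin p.2 * Complex.I)
    with hφ
  have hφeq : ∀ p : ℝ × ℝ, Complex.polarCoord.symm p = φ p := fun p =>
    Complex.polarCoord_symm_apply p
  have hφcirc : ∀ r θ : ℝ, φ (r, θ) = circleMap 0 r θ := by
    intro r θ
    simp [hφ, circleMap, Complex.exp_mul_I, ← Complex.ofReal_cos, ← Complex.ofReal_sin]
  have hφcont : Continuous φ := by
    apply Continuous.mul
    · exact Complex.continuous_ofReal.comp continuous_fst
    · apply Continuous.add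
      · exact Complex.continuous_ofReal.comp (Real.continuous_cos.comp continuous_snd)
      · exact (Complex.continuous_ofReal.comp
          (Real.continuous_sin.comp continuous_snd)).mul continuous_const
  set H : ℝ × ℝ → ENNReal := fun p =>
    ENNReal.ofReal p.1 * ENNReal.ofReal ((Complex.abs (f (φ p)))^2) with hH
  have hHmeas : Measurable H := by
    apply Measurable.mul (f := fun p : ℝ × ℝ => ENNReal.ofReal p.1)
      (g := fun p : ℝ × ℝ => ENNReal.ofReal ((Complex.abs (f (φ p)))^2))
    · exact ENNReal.continuous_ofReal.measurable.comp measurable_fst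
    · apply ENNReal.continuous_ofReal.measurable.comp
      exact ((Complex.continuous_abs.comp (hf.continuous.comp hφcont)).pow 2).measurable
  set E : ENNReal := ENNReal.ofReal (Real.exp (-((m:ℝ)+1+α))) with hE
  set S : Set (ℝ × ℝ) := Set.Ioo a b ×ˢ Set.Ioo (-π) π with hS
  have hSm : MeasurableSet S := measurableSet_Ioo.prod measurableSet_Ioo
  -- pointwise bound
  have step1 : ∀ p ∈ S, H p * E ≤ ENNReal.ofReal p.1 *
      ENNReal.ofReal ((Complex.abs (f (Complex.polarCoord.symm p)))^2 *
        Real.exp (-(Complex.abs (Complex.polarCoord.symm p))^2)) := by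
    rintro p ⟨⟨hp1, hp2⟩, _⟩
    have hp0 : 0 < p.1 := lt_trans ha0 hp1
    have habs : Complex.abs (Complex.polarCoord.symm p) = p.1 := by
      rw [Complex.polarCoord_symm_abs, _root_.abs_of_pos hp0]
    rw [habs, hφeq]
    have hexp : Real.exp (-((m:ℝ)+1+α)) ≤ Real.exp (-p.1^2) := by
      apply Real.exp_le_exp.2
      nlinarith
    calc H p * E = ENNReal.ofReal p.1 *
        (ENNReal.ofReal ((Complex.abs (f (φ p)))^2) * E) := by rw [hH]; ring
    _ ≤ ENNReal.ofReal p.1 *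
        ENNReal.ofReal ((Complex.abs (f (φ p)))^2 * Real.exp (-p.1^2)) := by
      apply mul_le_mul_right
      rw [ENNReal.ofReal_mul (by positivity)]
      exact mul_le_mul_right (ENNReal.ofReal_le_ofReal hexp) _
  -- Tonelli
  have step3 : ∫⁻ p in S, H p
      = ∫⁻ r in Set.Ioo a b, ∫⁻ θ in Set.Ioo (-π) π, H (r, θ) := by
    have hrestrict : (volume : Measure (ℝ × ℝ)).restrict S
        = ((volume : Measure ℝ).restrict (Set.Ioo a b)).prod
            ((volume : Measure ℝ).restrict (Set.Ioo (-π) π)) := by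
      rw [Measure.prod_restrict, ← Measure.volume_eq_prod]
    rw [hrestrict, lintegral_prod _ hHmeas.aemeasurable]
  -- inner bound
  set K : ENNReal := ENNReal.ofReal (a * (2 * π * a^(2*m) / Pm)) with hK
  have step4 : ∀ r ∈ Set.Ioo a b, K ≤ ∫⁻ θ in Set.Ioo (-π) π, H (r, θ) := by
    rintro r ⟨hr1, hr2⟩
    have hr0 : 0 < r := lt_trans ha0 hr1
    set u : ℝ → ℝ := fun θ => (Complex.abs (f (circleMap 0 r θ)))^2 with hu
    have hucont : Continuous u := by
      exact (Complex.continuous_abs.comp (hf.continuous.comp (continuous_circleMap 0 r))).pow 2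
    have hInt : IntegrableOn u (Set.Ioo (-π) π) :=
      (hucont.integrableOn_Icc).mono_set Set.Ioo_subset_Icc_self
    have hHval : ∀ θ : ℝ, H (r, θ) = ENNReal.ofReal r * ENNReal.ofReal (u θ) := by
      intro θ
      rw [hH]
      simp only [hφcirc r θ, hu]
    have hconst : ∫⁻ θ in Set.Ioo (-π) π, H (r, θ)
        = ENNReal.ofReal r * ∫⁻ θ in Set.Ioo (-π) π, ENNReal.ofReal (u θ) := by
      simp_rw [hHval]
      rw [lintegral_const_mul' _ _ ENNReal.ofReal_ne_top]
    have hlint : ∫⁻ θ in Set.Ioo (-π) π, ENNReal.ofReal (u θ)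
        = ENNReal.ofReal (∫ θ in Set.Ioo (-π) π, u θ) :=
      (ofReal_integral_eq_lintegral_ofReal hInt
        (Filter.Eventually.of_forall fun x => by positivity)).symm
    have hIoo : ∫ θ in Set.Ioo (-π) π, u θ = ∫ θ in (-π)..π, u θ := by
      rw [intervalIntegral.integral_of_le (by linarith [Real.pi_pos]),
        integral_Ioc_eq_integral_Ioo]
    have hper : Function.Periodic u (2*π) :=
      (periodic_circleMap 0 r).comp (fun w => (Complex.abs (f w))^2)
    have hshift : ∫ θ in (-π)..π, u θ = ∫ θ in (0:ℝ)..(2*π), u θ := by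
      have h1 := hper.intervalIntegral_add_eq (-π) 0
      have e1 : -π + 2*π = π := by ring
      have e2 : (0:ℝ) + 2*π = 2*π := by ring
      rw [e1, e2] at h1
      exact h1
    have hcb := circle_bound α hα' z hz f hf hf0 hzero m (by omega) hr0
    rw [hconst, hlint, hIoo, hshift, hK, ← ENNReal.ofReal_mul hr0.le]
    apply ENNReal.ofReal_le_ofReal
    have h1 : 2 * π * a^(2*m) / Pm ≤ 2 * π * r^(2*m) / Pm := by
      gcongr <;> first | exact ha0.le | skip
    have h2 : (0:ℝ) ≤ 2 * π * a^(2*m) / Pm := by positivity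
    have h3 : 2 * π * r^(2*m) / Pm ≤ ∫ θ in (0:ℝ)..(2*π), u θ := hcb
    calc a * (2 * π * a^(2*m) / Pm) ≤ r * (2 * π * r^(2*m) / Pm) :=
      mul_le_mul hr1.le h1 h2 hr0.le
    _ ≤ r * ∫ θ in (0:ℝ)..(2*π), u θ := mul_le_mul_of_nonneg_left h3 hr0.le
  -- final combination
  set e : ℝ := Real.exp (-((m:ℝ)+1+α)) with he
  have he0 : (0:ℝ) ≤ e := Real.exp_nonneg _
  have hX0 : (0:ℝ) ≤ a * (2 * π * a^(2*m) / Pm) := by positivity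
  have hreal : 2*π/3 * ((m:ℝ)+α)^m * e / Pm
      ≤ (a * (2 * π * a^(2*m) / Pm)) * (b - a) * e := by
    have hpow : a^(2*m) = ((m:ℝ)+α)^m := by rw [pow_mul, ha2]
    rw [hpow]
    have hD0 : (0:ℝ) ≤ 2 * π * ((m:ℝ)+α)^m * e / Pm := by positivity
    calc 2*π/3 * ((m:ℝ)+α)^m * e / Pm
        = (2*π*((m:ℝ)+α)^m*e/Pm) * (1/3) := by ring
    _ ≤ (2*π*((m:ℝ)+α)^m*e/Pm) * (a*(b-a)) := mul_le_mul_of_nonneg_left h13 hD0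
    _ = a * (2*π*((m:ℝ)+α)^m/Pm) * (b-a) * e := by ring
  calc ENNReal.ofReal ((2*π/3) * ((m:ℝ)+α)^m * e / Pm)
      ≤ ENNReal.ofReal ((a * (2 * π * a^(2*m) / Pm)) * (b - a) * e) :=
        ENNReal.ofReal_le_ofReal hreal
  _ = K * ENNReal.ofReal (b - a) * E := by
      rw [ENNReal.ofReal_mul (mul_nonneg hX0 (by linarith)), ENNReal.ofReal_mul hX0]
  _ = (∫⁻ _ in Set.Ioo a b, K) * E := by
      rw [setLIntegral_const, Real.volume_Ioo]
  _ ≤ (∫⁻ r in Set.Ioo a b, ∫⁻ θ in Set.Ioo (-π) π, H (r, θ)) * E :=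
      mul_le_mul_left (setLIntegral_mono' measurableSet_Ioo step4) E
  _ = (∫⁻ p in S, H p) * E := by rw [step3]
  _ = ∫⁻ p in S, H p * E := (lintegral_mul_const'' _ hHmeas.aemeasurable).symm
  _ ≤ _ := setLIntegral_mono' hSm step1

lemma term_bound (α : ℝ) (hα : α ≤ 1/2) (hα' : -1 < α) (m : ℕ) (hm : 2 ≤ m) :
    Real.exp (-1 - α - (1 - (α + 1/2) * Real.log (1 + α))) * (2*π/3) / ((m:ℝ)+1)
      ≤ (2*π/3) * ((m:ℝ)+α)^m * Real.exp (-((m:ℝ)+1+α)) /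
          (∏ n ∈ Finset.Icc 1 m, ((n:ℝ)+α)) := by
  have hm2 : (2:ℝ) ≤ (m:ℝ) := by exact_mod_cast hm
  have hy1 : (1:ℝ) < (m:ℝ) + α := by linarith
  have hy0 : (0:ℝ) < (m:ℝ) + α := by linarith
  obtain ⟨C, hC⟩ : ∃ C : ℝ, C = 1 - (α + 1/2) * Real.log (1 + α) := ⟨_, rfl⟩
  have hnpos : ∀ n ∈ Finset.Icc 1 m, (0:ℝ) < (n:ℝ) + α := by
    intro n hn
    have h1 : 1 ≤ n := (Finset.mem_Icc.1 hn).1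
    have : (1:ℝ) ≤ (n:ℝ) := by exact_mod_cast h1
    linarith
  set Pm : ℝ := ∏ n ∈ Finset.Icc 1 m, ((n:ℝ) + α) with hPm
  have hPmpos : 0 < Pm := Finset.prod_pos hnpos
  obtain ⟨S, hSd⟩ : ∃ S : ℝ, S = ∑ n ∈ Finset.Icc 1 m, Real.log ((n:ℝ) + α) := ⟨_, rfl⟩
  have hlogPm : Real.log Pm = S := by
    rw [hPm, Real.log_prod (fun n hn => (hnpos n hn).ne')]
    exact hSd.symm
  have hPmexp : Pm = Real.exp S := by
    rw [← hlogPm, Real.exp_log hPmpos]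
  have hpow : ((m:ℝ)+α)^m = Real.exp (m * Real.log ((m:ℝ)+α)) := by
    rw [← Real.log_pow, Real.exp_log (by positivity)]
  have hinv : 1 / ((m:ℝ)+1) = Real.exp (-(Real.log ((m:ℝ)+1))) := by
    rw [Real.exp_neg, Real.exp_log (by linarith)]
    rw [one_div]
  have hsum := sum_log_le α hα' m (by omega)
  rw [← hSd, ← hC] at hsum
  have hαlog : (α + 1/2) * Real.log ((m:ℝ)+α) ≤ Real.log ((m:ℝ)+1) := by
    have hylog : 0 ≤ Real.log ((m:ℝ)+α) := Real.log_nonneg hy1.le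
    have hlogle : Real.log ((m:ℝ)+α) ≤ Real.log ((m:ℝ)+1) :=
      Real.log_le_log hy0 (by linarith)
    rcases le_or_gt 0 (α + 1/2) with h | h
    · calc (α + 1/2) * Real.log ((m:ℝ)+α) ≤ 1 * Real.log ((m:ℝ)+α) :=
        mul_le_mul_of_nonneg_right (by linarith) hylog
      _ ≤ Real.log ((m:ℝ)+1) := by linarith
    · calc (α + 1/2) * Real.log ((m:ℝ)+α) ≤ 0 := mul_nonpos_of_nonpos_of_nonneg h.le hylog
      _ ≤ Real.log ((m:ℝ)+1) := le_trans hylog hlogle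
  have hexp : Real.exp (-1 - α - C - Real.log ((m:ℝ)+1))
      ≤ Real.exp ((m:ℝ) * Real.log ((m:ℝ)+α) - ((m:ℝ)+1+α) - S) := by
    apply Real.exp_le_exp.2
    linarith
  rw [← hC]
  calc Real.exp (-1 - α - C) * (2*π/3) / ((m:ℝ)+1)
      = (2*π/3) * (Real.exp (-1 - α - C) * (1 / ((m:ℝ)+1))) := by ring
  _ = (2*π/3) * Real.exp (-1 - α - C - Real.log ((m:ℝ)+1)) := by
      rw [hinv, ← Real.exp_add]
      ring_nf
  _ ≤ (2*π/3) * Real.exp ((m:ℝ) * Real.log ((m:ℝ)+α) - ((m:ℝ)+1+α) - S) := by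
      apply mul_le_mul_of_nonneg_left hexp (by positivity)
  _ = (2*π/3) * ((m:ℝ)+α)^m * Real.exp (-((m:ℝ)+1+α)) / Pm := by
      rw [hpow, hPmexp, mul_assoc, ← Real.exp_add,
        eq_div_iff (Real.exp_ne_zero S), mul_assoc, ← Real.exp_add]
      congr 1
      ring

end Statement2Aux

open Statement2Aux Filter Real

/-- sequences of moduli √(n+α), α ≤ 1/2, are uniqueness sets for F². -/
theorem statement2
    (α : ℝ) (hα : α ≤ 1/2) (hα' : -1 < α)
    (z : ℕ → ℂ) (hz : ∀ n : ℕ, 1 ≤ n → ‖z n‖ = Real.sqrt (n + α))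
    (f : ℂ → ℂ) (hf : Differentiable ℂ f) (hf0 : ‖f 0‖ = 1)
    (hzeros : ∀ w : ℂ, f w = 0 ↔ ∃ n : ℕ, 1 ≤ n ∧ w = z n) :
    ∫⁻ w : ℂ, ENNReal.ofReal ((‖f w‖) ^ 2 *
      Real.exp (-(‖w‖) ^ 2)) = ⊤ := by
  by_contra hcon
  set g : ℂ → ENNReal := fun w =>
    ENNReal.ofReal ((Complex.abs (f w)) ^ 2 * Real.exp (-(Complex.abs w) ^ 2)) with hg
  set I : ENNReal := ∫⁻ w : ℂ, g w with hI
  have htop : I ≠ ⊤ := hcon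
  have hzero : ∀ n : ℕ, 1 ≤ n → f (z n) = 0 := fun n hn => (hzeros (z n)).2 ⟨n, hn, rfl⟩
  have hpolar : I = ∫⁻ p in polarCoord.target,
      ENNReal.ofReal p.1 * g (Complex.polarCoord.symm p) :=
    lintegral_comp_polarCoord_symm g
  -- constants
  set ε : ℝ := Real.exp (-1 - α - (1 - (α + 1/2) * Real.log (1 + α))) * (2*π/3) with hε
  have hε0 : 0 < ε := by positivity
  -- annuli
  set SS : ℕ → Set (ℝ × ℝ) := fun m =>
    Set.Ioo (Real.sqrt ((m:ℝ)+α)) (Real.sqrt ((m:ℝ)+1+α)) ×ˢ Set.Ioo (-π) π with hSS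
  have hSSm : ∀ m : ℕ, MeasurableSet (SS m) := fun m =>
    measurableSet_Ioo.prod measurableSet_Ioo
  have hSSsub : ∀ m : ℕ, 2 ≤ m → SS m ⊆ polarCoord.target := by
    intro m hm
    rw [polarCoord_target, hSS]
    apply Set.prod_mono_left
    intro x hx
    have h2 : (2:ℝ) ≤ (m:ℝ) := by exact_mod_cast hm
    have : (0:ℝ) < Real.sqrt ((m:ℝ)+α) := Real.sqrt_pos.2 (by linarith)
    exact lt_trans this hx.1
  have hdisj : ∀ i j : ℕ, i < j → Disjoint (SS i) (SS j) := by
    intro i j hij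
    rw [hSS]
    apply Set.disjoint_prod.2
    left
    rw [Set.Ioo_disjoint_Ioo]
    have h1 : Real.sqrt ((i:ℝ)+1+α) ≤ Real.sqrt ((j:ℝ)+α) := by
      apply Real.sqrt_le_sqrt
      have : (i:ℝ) + 1 ≤ (j:ℝ) := by exact_mod_cast hij
      linarith
    calc min (Real.sqrt ((i:ℝ)+1+α)) (Real.sqrt ((j:ℝ)+1+α))
        ≤ Real.sqrt ((i:ℝ)+1+α) := min_le_left _ _
    _ ≤ Real.sqrt ((j:ℝ)+α) := h1
    _ ≤ max (Real.sqrt ((i:ℝ)+α)) (Real.sqrt ((j:ℝ)+α)) := le_max_right _ _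
  -- the key finite-sum bound
  have hMAIN : ∀ M : ℕ, ENNReal.ofReal (∑ m ∈ Finset.Icc 2 M, ε / ((m:ℝ)+1)) ≤ I := by
    intro M
    set c : ℕ → ℝ := fun m => (2*π/3) * ((m:ℝ)+α)^m * Real.exp (-((m:ℝ)+1+α)) /
        (∏ n ∈ Finset.Icc 1 m, ((n:ℝ)+α)) with hc
    have hc0 : ∀ m ∈ Finset.Icc 2 M, 0 ≤ c m := by
      intro m hm
      have hnpos : ∀ n ∈ Finset.Icc 1 m, (0:ℝ) < (n:ℝ) + α := by
        intro n hn
        have h1 : 1 ≤ n := (Finset.mem_Icc.1 hn).1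
        have : (1:ℝ) ≤ (n:ℝ) := by exact_mod_cast h1
        linarith
      have hm2 : (2:ℝ) ≤ (m:ℝ) := by exact_mod_cast (Finset.mem_Icc.1 hm).1
      have hPmpos : 0 < ∏ n ∈ Finset.Icc 1 m, ((n:ℝ)+α) := Finset.prod_pos hnpos
      have h5 : (0:ℝ) ≤ ((m:ℝ)+α)^m := pow_nonneg (by linarith) m
      have h6 : (0:ℝ) ≤ (2*π/3) * ((m:ℝ)+α)^m * Real.exp (-((m:ℝ)+1+α)) :=
        mul_nonneg (mul_nonneg (by positivity) h5) (Real.exp_nonneg _)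
      exact div_nonneg h6 hPmpos.le
    calc ENNReal.ofReal (∑ m ∈ Finset.Icc 2 M, ε / ((m:ℝ)+1))
        ≤ ENNReal.ofReal (∑ m ∈ Finset.Icc 2 M, c m) := by
          apply ENNReal.ofReal_le_ofReal
          apply Finset.sum_le_sum
          intro m hm
          exact term_bound α hα hα' m (Finset.mem_Icc.1 hm).1
    _ = ∑ m ∈ Finset.Icc 2 M, ENNReal.ofReal (c m) := ENNReal.ofReal_sum_of_nonneg hc0
    _ ≤ ∑ m ∈ Finset.Icc 2 M, ∫⁻ p in SS m,
          ENNReal.ofReal p.1 * g (Complex.polarCoord.symm p) := by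
          apply Finset.sum_le_sum
          intro m hm
          exact annulus_bound α hα' z hz f hf hf0 hzero m (Finset.mem_Icc.1 hm).1
    _ = ∫⁻ p in ⋃ m ∈ Finset.Icc 2 M, SS m,
          ENNReal.ofReal p.1 * g (Complex.polarCoord.symm p) := by
          refine (lintegral_biUnion_finset ?_ (fun m _ => hSSm m) _).symm
          intro i hi j hj hij
          rcases lt_or_gt_of_ne hij with h | h
          · exact hdisj i j h
          · exact (hdisj j i h).symm
    _ ≤ ∫⁻ p in polarCoord.target,
          ENNReal.ofReal p.1 * g (Complex.polarCoord.symm p) := by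
          apply lintegral_mono_set
          apply Set.iUnion₂_subset
          intro m hm
          exact hSSsub m (Finset.mem_Icc.1 hm).1
    _ = I := hpolar.symm
  -- divergence of the harmonic-type sum
  have hdiv : Tendsto (fun M : ℕ => ∑ m ∈ Finset.Icc 2 M, ε / ((m:ℝ)+1)) atTop atTop := by
    have h0 : ∀ M : ℕ, 1 ≤ M → ∑ m ∈ Finset.Icc 2 M, ε / ((m:ℝ)+1)
        = ε * ((∑ i ∈ Finset.range (M+1), 1/((i:ℝ)+1)) - (1 + 1/2)) := by
      intro M hM
      have h1 : ∑ i ∈ Finset.Ico (0:ℕ) 2, (1:ℝ)/((i:ℝ)+1)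
          + ∑ i ∈ Finset.Ico (2:ℕ) (M+1), (1:ℝ)/((i:ℝ)+1)
          = ∑ i ∈ Finset.Ico (0:ℕ) (M+1), (1:ℝ)/((i:ℝ)+1) :=
        Finset.sum_Ico_consecutive (fun i : ℕ => (1:ℝ)/((i:ℝ)+1)) (by omega) (by omega)
      have h2 : ∑ i ∈ Finset.Ico (0:ℕ) 2, (1:ℝ)/((i:ℝ)+1) = 1 + 1/2 := by
        rw [← Finset.range_eq_Ico]
        rw [Finset.sum_range_succ, Finset.sum_range_succ, Finset.sum_range_zero]
        norm_num
      have h3 : Finset.Icc 2 M = Finset.Ico (2:ℕ) (M+1) := by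
        rw [Finset.Ico_add_one_right_eq_Icc]
      have h4 : Finset.Ico (0:ℕ) (M+1) = Finset.range (M+1) := by
        rw [Finset.range_eq_Ico]
      rw [h4] at h1
      have h5 : ∑ m ∈ Finset.Icc 2 M, ε/((m:ℝ)+1)
          = ε * ∑ m ∈ Finset.Ico (2:ℕ) (M+1), (1:ℝ)/((m:ℝ)+1) := by
        rw [h3, Finset.mul_sum]
        exact Finset.sum_congr rfl fun i _ => by rw [mul_one_div]
      rw [h5]
      rw [h2] at h1
      have h6 : ∑ m ∈ Finset.Ico (2:ℕ) (M+1), (1:ℝ)/((m:ℝ)+1)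
          = (∑ i ∈ Finset.range (M+1), 1/((i:ℝ)+1)) - (1 + 1/2) := by linarith
      rw [h6]
    have ht1 : Tendsto (fun M : ℕ => (∑ i ∈ Finset.range (M+1), 1/((i:ℝ)+1))) atTop atTop :=
      Real.tendsto_sum_range_one_div_nat_succ_atTop.comp (Filter.tendsto_add_atTop_nat 1)
    have ht2 : Tendsto (fun M : ℕ =>
        (∑ i ∈ Finset.range (M+1), 1/((i:ℝ)+1)) - (1+1/2)) atTop atTop := by
      simpa [sub_eq_add_neg] using
        Filter.tendsto_atTop_add_const_right atTop (-(1+1/2 : ℝ)) ht1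
    have hEq : (fun M : ℕ => ε * ((∑ i ∈ Finset.range (M+1), 1/((i:ℝ)+1)) - (1+1/2)))
        =ᶠ[atTop] (fun M : ℕ => ∑ m ∈ Finset.Icc 2 M, ε / ((m:ℝ)+1)) := by
      filter_upwards [Filter.eventually_ge_atTop 1] with M hM using (h0 M hM).symm
    exact Tendsto.congr' hEq (ht2.const_mul_atTop hε0)
  -- contradiction
  obtain ⟨M, hM⟩ := (hdiv.eventually_gt_atTop (I.toReal)).exists
  have := (ENNReal.ofReal_le_iff_le_toReal htop).1 (hMAIN M)
  linarith
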